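/- arXiv:2505.15575 — 6 statements merged into one kernel-verified Lean document; each statement's English description precedes it below -/
import Mathlib

section
/- Let μ, ν be probability measures on ℝ, and suppose α is an atom of μ and β is an atom of ν with μ({α}) + ν({β}) > 1. Then F_{μ⊞ν}(α+β) = F_μ(α) + F_ν(β) - 1, where F denotes the cumulative distribution function. -/
open MeasureTheory

noncomputable def cdf (μ : Measure ℝ) (x : ℝ) : ℝ := (μ (Set.Iic x)).toReal

/-- cut-down measure: all mass in `(-∞, α]` moved to `α`. -/
noncomputable def cut (μ : Measure ℝ) (α : ℝ) : Measure ℝ :=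
  (μ (Set.Iic α)) • Measure.dirac α + μ.restrict (Set.Ioi α)

lemma cut_isProb (μ : Measure ℝ) (hμ : IsProbabilityMeasure μ) (α : ℝ) :
    IsProbabilityMeasure (cut μ α) := by
  constructor
  rw [cut, Measure.add_apply, Measure.smul_apply, Measure.restrict_apply MeasurableSet.univ,
    Set.univ_inter]
  simp only [Measure.dirac_apply_of_mem (Set.mem_univ α), smul_eq_mul, mul_one]
  rw [← measure_union (Set.Iic_disjoint_Ioi le_rfl) measurableSet_Ioi, Set.Iic_union_Ioi,
    measure_univ]

lemma cut_cdf_le (μ : Measure ℝ) (α x : ℝ) : cdf (cut μ α) x ≤ cdf μ x := by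
  rw [cdf, cdf, cut, Measure.add_apply, Measure.smul_apply,
    Measure.restrict_apply measurableSet_Iic]
  by_cases hx : α ≤ x
  · rw [Measure.dirac_apply' _ measurableSet_Iic, Set.indicator_of_mem (by simpa using hx),
      Pi.one_apply, smul_eq_mul, mul_one, Set.Iic_inter_Ioi, ← measure_union
      (Set.Iic_disjoint_Ioc le_rfl) measurableSet_Ioc, Set.Iic_union_Ioc_eq_Iic hx]
  · rw [Measure.dirac_apply' _ measurableSet_Iic, Set.indicator_of_notMem (by simpa using hx),
      smul_eq_mul, mul_zero, Set.Iic_inter_Ioi, Set.Ioc_eq_empty (by linarith [lt_of_not_ge hx]),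
      measure_empty, add_zero]
    positivity

lemma cut_singleton (μ : Measure ℝ) (α : ℝ) : cut μ α {α} = μ (Set.Iic α) := by
  rw [cut, Measure.add_apply, Measure.smul_apply,
    Measure.restrict_apply (measurableSet_singleton α)]
  have : ({α} : Set ℝ) ∩ Set.Ioi α = ∅ := by
    ext t; simp (config := {contextual := true}) [lt_irrefl]
  rw [this, measure_empty, add_zero]
  simp

lemma cdf_split (μ : Measure ℝ) (α : ℝ) :
    (μ (Set.Iic α)) = μ (Set.Iio α) + μ {α} := by
  rw [← measure_union (by simp) (measurableSet_singleton α), Set.Iio_union_right]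

lemma toReal_Ici (μ : Measure ℝ) [IsProbabilityMeasure μ] (α : ℝ) :
    (μ (Set.Ici α)).toReal = 1 - (μ (Set.Iio α)).toReal := by
  have h := measure_union (Set.Iio_disjoint_Ici (le_refl α)) measurableSet_Ici (μ := μ)
  rw [Set.Iio_union_Ici, measure_univ] at h
  have h1 : μ (Set.Iio α) ≠ ⊤ := measure_ne_top μ _
  have h2 : μ (Set.Ici α) ≠ ⊤ := measure_ne_top μ _
  have h3 := congrArg ENNReal.toReal h.symm
  rw [ENNReal.toReal_add h1 h2, ENNReal.toReal_one] at h3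
  linarith

/-- lower bound -/
lemma freeAdd_cdf_lb
    (conv : Measure ℝ → Measure ℝ → Measure ℝ)
    (hprob : ∀ μ ν : Measure ℝ, IsProbabilityMeasure μ → IsProbabilityMeasure ν →
      IsProbabilityMeasure (conv μ ν))
    (hcomm : ∀ μ ν : Measure ℝ, conv μ ν = conv ν μ)
    (hmono : ∀ μ₁ μ₂ ν : Measure ℝ, IsProbabilityMeasure μ₁ → IsProbabilityMeasure μ₂ →
      IsProbabilityMeasure ν → (∀ x, cdf μ₂ x ≤ cdf μ₁ x) →
      ∀ x, cdf (conv μ₂ ν) x ≤ cdf (conv μ₁ ν) x)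
    (hatom : ∀ μ ν : Measure ℝ, IsProbabilityMeasure μ → IsProbabilityMeasure ν →
      ∀ α β : ℝ, 1 < (μ {α}).toReal + (ν {β}).toReal →
      ((conv μ ν) {α + β}).toReal = (μ {α}).toReal + (ν {β}).toReal - 1)
    (μ ν : Measure ℝ) (hμ : IsProbabilityMeasure μ) (hν : IsProbabilityMeasure ν)
    (α β : ℝ) (h : 1 < (μ {α}).toReal + (ν {β}).toReal) :
    cdf μ α + cdf ν β - 1 ≤ cdf (conv μ ν) (α + β) := by
  set μ₂ := cut μ α with hμ₂
  set ν₂ := cut ν β with hν₂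
  have hμ₂p := cut_isProb μ hμ α
  have hν₂p := cut_isProb ν hν β
  -- atom masses of the cut measures
  have hμ₂a : (μ₂ {α}).toReal = cdf μ α := by rw [hμ₂, cut_singleton]; rfl
  have hν₂a : (ν₂ {β}).toReal = cdf ν β := by rw [hν₂, cut_singleton]; rfl
  -- cdf μ α ≥ (μ {α}).toReal etc.
  have hμle : (μ {α}).toReal ≤ cdf μ α := ENNReal.toReal_mono (measure_ne_top μ _)
    (measure_mono (by simp))
  have hνle : (ν {β}).toReal ≤ cdf ν β := ENNReal.toReal_mono (measure_ne_top ν _)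
    (measure_mono (by simp))
  have hbig : 1 < (μ₂ {α}).toReal + (ν₂ {β}).toReal := by
    rw [hμ₂a, hν₂a]; linarith
  have hat := hatom μ₂ ν₂ hμ₂p hν₂p α β hbig
  rw [hμ₂a, hν₂a] at hat
  -- cdf of conv μ₂ ν₂ at α+β is at least its mass at the atom
  have hρp := hprob μ₂ ν₂ hμ₂p hν₂p
  have h1 : cdf μ α + cdf ν β - 1 ≤ cdf (conv μ₂ ν₂) (α + β) := by
    rw [← hat]
    exact ENNReal.toReal_mono (measure_ne_top _ _) (measure_mono (by simp))
  have h2 : cdf (conv μ₂ ν₂) (α + β) ≤ cdf (conv μ₂ ν) (α + β) := by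
    rw [hcomm μ₂ ν₂, hcomm μ₂ ν]
    exact hmono ν ν₂ μ₂ hν hν₂p hμ₂p (cut_cdf_le ν β) (α + β)
  have h3 : cdf (conv μ₂ ν) (α + β) ≤ cdf (conv μ ν) (α + β) :=
    hmono μ μ₂ ν hμ hμ₂p hν (cut_cdf_le μ α) (α + β)
  linarith

/-- If `α` is an atom of `μ` and `β` an atom of `ν` with `μ({α}) + ν({β}) > 1`, then
`F_{μ⊞ν}(α+β) = F_μ(α) + F_ν(β) - 1`.  The free additive convolution is formalized as an
abstract operation `conv` satisfying the known properties of `⊞`: it maps probability measures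
to probability measures, it is commutative, monotone for the stochastic order, satisfies
`δ_a ⊞ δ_b = δ_{a+b}`, the Bercovici–Voiculescu atom theorem, and the reflection identity
`(μ ⊞ ν)^ = μ̂ ⊞ ν̂`. -/
theorem cdf_at_atom_freeAdd
    (conv : Measure ℝ → Measure ℝ → Measure ℝ)
    (hprob : ∀ μ ν : Measure ℝ, IsProbabilityMeasure μ → IsProbabilityMeasure ν →
      IsProbabilityMeasure (conv μ ν))
    (hcomm : ∀ μ ν : Measure ℝ, conv μ ν = conv ν μ)
    (hmono : ∀ μ₁ μ₂ ν : Measure ℝ, IsProbabilityMeasure μ₁ → IsProbabilityMeasure μ₂ →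
      IsProbabilityMeasure ν → (∀ x, cdf μ₂ x ≤ cdf μ₁ x) →
      ∀ x, cdf (conv μ₂ ν) x ≤ cdf (conv μ₁ ν) x)
    (hdirac : ∀ a b : ℝ, conv (Measure.dirac a) (Measure.dirac b) = Measure.dirac (a + b))
    (hatom : ∀ μ ν : Measure ℝ, IsProbabilityMeasure μ → IsProbabilityMeasure ν →
      ∀ α β : ℝ, 1 < (μ {α}).toReal + (ν {β}).toReal →
      ((conv μ ν) {α + β}).toReal = (μ {α}).toReal + (ν {β}).toReal - 1)
    (hrefl : ∀ μ ν : Measure ℝ, IsProbabilityMeasure μ → IsProbabilityMeasure ν →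
      conv (μ.map (fun t => -t)) (ν.map (fun t => -t)) = (conv μ ν).map (fun t => -t))
    (μ ν : Measure ℝ) (hμ : IsProbabilityMeasure μ) (hν : IsProbabilityMeasure ν)
    (α β : ℝ) (h : 1 < (μ {α}).toReal + (ν {β}).toReal) :
    cdf (conv μ ν) (α + β) = cdf μ α + cdf ν β - 1 := by
  have hρp := hprob μ ν hμ hν
  have hlb := freeAdd_cdf_lb conv hprob hcomm hmono hatom μ ν hμ hν α β h
  -- reflected measures
  set μ' := μ.map (fun t : ℝ => -t) with hμ'
  set ν' := ν.map (fun t : ℝ => -t) with hν'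
  have hμ'p : IsProbabilityMeasure μ' := Measure.isProbabilityMeasure_map measurable_neg.aemeasurable
  have hν'p : IsProbabilityMeasure ν' := Measure.isProbabilityMeasure_map measurable_neg.aemeasurable
  have hmapsingleton : ∀ (κ : Measure ℝ) (a : ℝ),
      (κ.map (fun t : ℝ => -t)) {(-a)} = κ {a} := by
    intro κ a
    rw [Measure.map_apply measurable_neg (measurableSet_singleton _)]
    congr 1
    ext t; simp [neg_eq_iff_eq_neg]
  have hmapIic : ∀ (κ : Measure ℝ) (a : ℝ),
      (κ.map (fun t : ℝ => -t)) (Set.Iic (-a)) = κ (Set.Ici a) := by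
    intro κ a
    rw [Measure.map_apply measurable_neg measurableSet_Iic]
    congr 1
    ext t; simp
  have hμ'a : (μ' {(-α)}).toReal = (μ {α}).toReal := by rw [hμ', hmapsingleton]
  have hν'a : (ν' {(-β)}).toReal = (ν {β}).toReal := by rw [hν', hmapsingleton]
  have hlb' := freeAdd_cdf_lb conv hprob hcomm hmono hatom μ' ν' hμ'p hν'p (-α) (-β)
    (by rw [hμ'a, hν'a]; exact h)
  rw [hrefl μ ν hμ hν] at hlb'
  -- translate all terms
  have hcdfμ' : cdf μ' (-α) = 1 - (μ (Set.Iio α)).toReal := by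
    rw [cdf, hμ', hmapIic, toReal_Ici]
  have hcdfν' : cdf ν' (-β) = 1 - (ν (Set.Iio β)).toReal := by
    rw [cdf, hν', hmapIic, toReal_Ici]
  have hcdfρ' : cdf ((conv μ ν).map (fun t : ℝ => -t)) (-α + -β)
      = 1 - ((conv μ ν) (Set.Iio (α + β))).toReal := by
    rw [cdf, show (-α + -β) = -(α + β) by ring, hmapIic, toReal_Ici]
  rw [hcdfμ', hcdfν', hcdfρ'] at hlb'
  -- toReal splits
  have hsplit : ∀ (κ : Measure ℝ) (a : ℝ), IsProbabilityMeasure κ →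
      (κ (Set.Iic a)).toReal = (κ (Set.Iio a)).toReal + (κ {a}).toReal := by
    intro κ a hκ
    rw [cdf_split, ENNReal.toReal_add (measure_ne_top κ _) (measure_ne_top κ _)]
  have hat := hatom μ ν hμ hν α β h
  have e1 := hsplit μ α hμ
  have e2 := hsplit ν β hν
  have e3 := hsplit (conv μ ν) (α + β) hρp
  rw [hat] at e3
  simp only [cdf] at hlb ⊢
  linarith
end

section
/- Let p, q be monic complex polynomials of degree d such that α is a root of p of multiplicity m_α and β is a root of q of multiplicity m_β, with m := m_α + m_β - d ≥ 0. Then α + β is a root of the finite free additive convolution p ⊞_d q of multiplicity exactly m (in particular, if m = 0 then α + β is not a root of p ⊞_d q). -/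
open Polynomial Finset

/-- The normalized coefficients of a monic degree-`d` polynomial:
`p(x) = Σ_{k=0}^d x^{d-k} (-1)^k C(d,k) ẽ_k(p)`. -/
noncomputable def etilde (d : ℕ) (p : Polynomial ℂ) (k : ℕ) : ℂ :=
  (-1) ^ k * p.coeff (d - k) / (d.choose k : ℂ)

/-- The finite free additive convolution of two degree-`d` polynomials, defined by
`ẽ_k(p ⊞_d q) = Σ_{i=0}^k C(k,i) ẽ_i(p) ẽ_{k-i}(q)`. -/
noncomputable def ffAdd (d : ℕ) (p q : Polynomial ℂ) : Polynomial ℂ :=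
  ∑ k ∈ range (d + 1),
    C ((-1) ^ k * (d.choose k : ℂ) *
      ∑ i ∈ range (k + 1), (k.choose i : ℂ) * etilde d p i * etilde d q (k - i)) * X ^ (d - k)

open Nat in
lemma chooseIdC {d i j : ℕ} (h : i + j ≤ d) :
    (d.choose (i+j) : ℂ) * ((i+j).choose i) * ((d ! : ℕ) * ((d-i-j)! : ℕ)) =
      (((d-j)! : ℕ) * ((d-i)! : ℕ)) * ((d.choose i) * (d.choose j)) := by
  have hi : i ≤ d := le_trans (Nat.le_add_right i j) h
  have hj : j ≤ d := le_trans (Nat.le_add_left j i) h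
  have e1 : (((i+j).choose i : ℕ) : ℂ) * (i ! : ℕ) * (j ! : ℕ) = ((i+j)! : ℕ) := by
    have := Nat.choose_mul_factorial_mul_factorial (Nat.le_add_right i j)
    rw [Nat.add_sub_cancel_left] at this
    exact_mod_cast congrArg (Nat.cast : ℕ → ℂ) this
  have e2 : ((d.choose (i+j) : ℕ) : ℂ) * ((i+j)! : ℕ) * ((d-i-j)! : ℕ) = (d ! : ℕ) := by
    have := Nat.choose_mul_factorial_mul_factorial h
    rw [Nat.sub_sub]
    exact_mod_cast congrArg (Nat.cast : ℕ → ℂ) this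
  have e3 : ((d.choose i : ℕ) : ℂ) * (i ! : ℕ) * ((d-i)! : ℕ) = (d ! : ℕ) :=
    by exact_mod_cast congrArg (Nat.cast : ℕ → ℂ) (Nat.choose_mul_factorial_mul_factorial hi)
  have e4 : ((d.choose j : ℕ) : ℂ) * (j ! : ℕ) * ((d-j)! : ℕ) = (d ! : ℕ) :=
    by exact_mod_cast congrArg (Nat.cast : ℕ → ℂ) (Nat.choose_mul_factorial_mul_factorial hj)
  have hij : ((i ! : ℕ) : ℂ) * ((j ! : ℕ) : ℂ) ≠ 0 := by
    simp [Nat.factorial_ne_zero]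
  apply mul_right_cancel₀ hij
  linear_combination ((d.choose (i+j) : ℕ) : ℂ) * ((d ! : ℕ) : ℂ) * (((d-i-j)! : ℕ) : ℂ) * e1
    + ((d ! : ℕ) : ℂ) * e2
    - ((d.choose j : ℕ) : ℂ) * ((j ! : ℕ) : ℂ) * (((d-j)! : ℕ) : ℂ) * e3
    - ((d ! : ℕ) : ℂ) * e4

open Nat in
lemma scalarId {d i j : ℕ} (h : i + j ≤ d) (A B : ℂ) :
    (-1) ^ (i+j) * (d.choose (i+j) : ℂ) *
      (((i+j).choose i : ℂ) * ((-1) ^ i * A / (d.choose i : ℂ)) * ((-1) ^ j * B / (d.choose j : ℂ)))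
    = B * ((d-j)! : ℕ) / ((d ! : ℕ) : ℂ) * (A * ((d-i).descFactorial j : ℕ)) := by
  have hi : i ≤ d := le_trans (Nat.le_add_right i j) h
  have hj : j ≤ d := le_trans (Nat.le_add_left j i) h
  have hji : j ≤ d - i := by omega
  have hDF : (((d-i-j)! : ℕ) : ℂ) * ((d-i).descFactorial j : ℕ) = (((d-i)! : ℕ) : ℂ) := by
    exact_mod_cast congrArg (Nat.cast : ℕ → ℂ) (Nat.factorial_mul_descFactorial hji)
  have hsq : ∀ n : ℕ, ((-1 : ℂ)) ^ n * (-1) ^ n = 1 := fun n => by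
    rw [← pow_add]; exact Even.neg_one_pow ⟨n, rfl⟩
  have hCdi : ((d.choose i : ℕ) : ℂ) ≠ 0 := Nat.cast_ne_zero.2 (Nat.choose_pos hi).ne'
  have hCdj : ((d.choose j : ℕ) : ℂ) ≠ 0 := Nat.cast_ne_zero.2 (Nat.choose_pos hj).ne'
  have hfd : ((d ! : ℕ) : ℂ) ≠ 0 := Nat.cast_ne_zero.2 (Nat.factorial_ne_zero d)
  have hfdij : (((d-i-j)! : ℕ) : ℂ) ≠ 0 := Nat.cast_ne_zero.2 (Nat.factorial_ne_zero _)
  have key := chooseIdC h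
  rw [pow_add]
  have step1 : ((-1:ℂ))^i * (-1)^j * (d.choose (i+j) : ℂ) *
      (((i+j).choose i : ℂ) * ((-1) ^ i * A / (d.choose i : ℂ)) * ((-1) ^ j * B / (d.choose j : ℂ)))
      = ((-1:ℂ))^i * (-1)^i * (((-1:ℂ))^j * (-1)^j) *
        ((d.choose (i+j) : ℂ) * ((i+j).choose i) * A * B / ((d.choose i : ℂ) * (d.choose j : ℂ))) := by
    ring
  rw [step1, hsq i, hsq j, one_mul, one_mul]
  field_simp
  apply mul_right_cancel₀ hfdij
  linear_combination (A*B) * key - (A * B * (((d-j)! : ℕ):ℂ) * ((d.choose i : ℕ):ℂ) * ((d.choose j : ℕ):ℂ)) * hDF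

open Nat in
lemma ffAdd_eq_sum_deriv (d : ℕ) (p q : Polynomial ℂ) (hpd : p.natDegree ≤ d) :
    ffAdd d p q = ∑ j ∈ range (d + 1),
      C (q.coeff (d - j) * ((d-j)! : ℕ) / ((d ! : ℕ) : ℂ)) * derivative^[j] p := by
  -- expand p in the RHS
  have hp_eq : p = ∑ i ∈ range (d + 1), C (p.coeff (d - i)) * X ^ (d - i) := by
    conv_lhs => rw [p.as_sum_range' (d+1) (Nat.lt_succ_of_le hpd)]
    rw [← sum_range_reflect]
    refine sum_congr rfl fun i hi => ?_
    simp [C_mul_X_pow_eq_monomial]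
  -- RHS as a double sum
  have hRHS : ∀ j, derivative^[j] p =
      ∑ i ∈ range (d + 1), C (p.coeff (d - i)) * (C (((d-i).descFactorial j : ℕ) : ℂ) * X ^ (d - i - j)) := by
    intro j
    conv_lhs => rw [hp_eq]
    rw [iterate_derivative_sum]
    refine sum_congr rfl fun i hi => ?_
    rw [iterate_derivative_C_mul, iterate_derivative_X_pow_eq_C_mul]
  -- LHS as double sum over k, i with inner range extended to d+1
  calc ffAdd d p q
      = ∑ k ∈ range (d + 1), ∑ i ∈ range (d + 1),
          C ((-1) ^ k * (d.choose k : ℂ) * ((k.choose i : ℂ) * etilde d p i * etilde d q (k - i)))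
            * X ^ (d - k) := by
        unfold ffAdd
        refine sum_congr rfl fun k hk => ?_
        have hext : ∑ i ∈ range (k + 1), (k.choose i : ℂ) * etilde d p i * etilde d q (k - i)
            = ∑ i ∈ range (d + 1), (k.choose i : ℂ) * etilde d p i * etilde d q (k - i) := by
          refine sum_subset (by simp at hk ⊢; omega) fun i hi hni => ?_
          simp only [mem_range, not_lt] at hni
          rw [Nat.choose_eq_zero_of_lt (by omega)]
          simp
        rw [hext, mul_sum, map_sum, sum_mul]
    _ = ∑ j ∈ range (d + 1),
      C (q.coeff (d - j) * ((d-j)! : ℕ) / ((d ! : ℕ) : ℂ)) * derivative^[j] p := by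
        conv_rhs => rw [show (∑ j ∈ range (d + 1),
            C (q.coeff (d - j) * ((d-j)! : ℕ) / ((d ! : ℕ) : ℂ)) * derivative^[j] p)
          = ∑ j ∈ range (d + 1), ∑ i ∈ range (d + 1),
            C (q.coeff (d - j) * ((d-j)! : ℕ) / ((d ! : ℕ) : ℂ)) *
              (C (p.coeff (d - i)) * (C (((d-i).descFactorial j : ℕ) : ℂ) * X ^ (d - i - j)))
          from sum_congr rfl fun j _ => by rw [hRHS j, mul_sum]]
        rw [Finset.sum_comm]
        conv_rhs => rw [Finset.sum_comm]
        refine sum_congr rfl fun i hi => ?_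
        simp only [mem_range] at hi
        have hid : i ≤ d := by omega
        -- restrict LHS inner sum to Ico i (d+1) and reindex
        have hL : ∑ k ∈ range (d + 1),
            C ((-1) ^ k * (d.choose k : ℂ) * ((k.choose i : ℂ) * etilde d p i * etilde d q (k - i)))
              * X ^ (d - k)
            = ∑ j ∈ range (d + 1 - i),
            C ((-1) ^ (i+j) * (d.choose (i+j) : ℂ) * (((i+j).choose i : ℂ) * etilde d p i * etilde d q ((i+j) - i)))
              * X ^ (d - (i+j)) := by
          calc ∑ k ∈ range (d + 1),
              C ((-1) ^ k * (d.choose k : ℂ) * ((k.choose i : ℂ) * etilde d p i * etilde d q (k - i)))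
                * X ^ (d - k)
              = ∑ k ∈ Ico i (d + 1),
              C ((-1) ^ k * (d.choose k : ℂ) * ((k.choose i : ℂ) * etilde d p i * etilde d q (k - i)))
                * X ^ (d - k) := by
                refine (sum_subset ?_ fun k hk hnk => ?_).symm
                · intro k hk
                  simp only [mem_Ico] at hk
                  simp only [mem_range]
                  omega
                · simp only [mem_range, mem_Ico, not_and, not_le] at hk hnk
                  have : k < i := by omega
                  rw [Nat.choose_eq_zero_of_lt this]
                  simp
            _ = ∑ j ∈ range (d + 1 - i),
              C ((-1) ^ (i+j) * (d.choose (i+j) : ℂ) * (((i+j).choose i : ℂ) * etilde d p i * etilde d q ((i+j) - i)))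
                * X ^ (d - (i+j)) := by rw [sum_Ico_eq_sum_range]
        rw [hL]
        -- restrict RHS inner sum to range (d - i + 1) = range (d + 1 - i)
        have hR : ∑ j ∈ range (d + 1),
            C (q.coeff (d - j) * ((d-j)! : ℕ) / ((d ! : ℕ) : ℂ)) *
              (C (p.coeff (d - i)) * (C (((d-i).descFactorial j : ℕ) : ℂ) * X ^ (d - i - j)))
            = ∑ j ∈ range (d + 1 - i),
            C (q.coeff (d - j) * ((d-j)! : ℕ) / ((d ! : ℕ) : ℂ)) *
              (C (p.coeff (d - i)) * (C (((d-i).descFactorial j : ℕ) : ℂ) * X ^ (d - i - j))) := by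
          refine (sum_subset (by intro j hj; simp only [mem_range] at *; omega) fun j hj hnj => ?_).symm
          simp only [mem_range, not_lt] at hnj
          rw [Nat.descFactorial_eq_zero_iff_lt.2 (by omega)]
          simp
        rw [hR]
        refine sum_congr rfl fun j hj => ?_
        simp only [mem_range] at hj
        have hijd : i + j ≤ d := by omega
        rw [Nat.add_sub_cancel_left, show d - (i + j) = d - i - j by omega]
        simp only [← map_mul, ← mul_assoc]
        congr 1
        unfold etilde
        exact congrArg C (by linear_combination scalarId hijd (p.coeff (d - i)) (q.coeff (d - j)))

lemma ffAdd_comm (d : ℕ) (p q : Polynomial ℂ) : ffAdd d p q = ffAdd d q p := by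
  unfold ffAdd
  refine sum_congr rfl fun k hk => ?_
  refine congrArg (· * X ^ (d - k)) (congrArg C ?_)
  congr 1
  rw [← sum_range_reflect]
  refine sum_congr rfl fun i hi => ?_
  simp only [mem_range] at hi
  rw [Nat.succ_sub_one, show k - (k - i) = i by omega, Nat.choose_symm (by omega)]
  ring

lemma iterate_derivative_comp_X_add_C (p : Polynomial ℂ) (c : ℂ) (j : ℕ) :
    derivative^[j] (p.comp (X + C c)) = (derivative^[j] p).comp (X + C c) := by
  induction j generalizing p with
  | zero => simp
  | succ n ih =>
      rw [Function.iterate_succ_apply, Function.iterate_succ_apply, ← ih, derivative_comp]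
      simp

lemma ffAdd_comp_left (d : ℕ) (p q : Polynomial ℂ) (hpd : p.natDegree ≤ d) (c : ℂ) :
    ffAdd d (p.comp (X + C c)) q = (ffAdd d p q).comp (X + C c) := by
  have hpd' : (p.comp (X + C c)).natDegree ≤ d := by
    rwa [natDegree_comp, natDegree_X_add_C, mul_one]
  rw [ffAdd_eq_sum_deriv d _ q hpd', ffAdd_eq_sum_deriv d p q hpd, Polynomial.sum_comp]
  refine sum_congr rfl fun j hj => ?_
  rw [mul_comp, C_comp, iterate_derivative_comp_X_add_C]

lemma ffAdd_comp (d : ℕ) (p q : Polynomial ℂ) (hpd : p.natDegree ≤ d) (hqd : q.natDegree ≤ d)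
    (a b : ℂ) :
    ffAdd d (p.comp (X + C a)) (q.comp (X + C b)) = (ffAdd d p q).comp (X + C (a + b)) := by
  rw [ffAdd_comm, ffAdd_comp_left d q _ hqd b, ffAdd_comm, ffAdd_comp_left d p q hpd a,
    comp_assoc]
  rw [add_comp, X_comp, C_comp, add_assoc, ← C_add, add_comm b a]

open Nat in
lemma ffAdd_coeff (d : ℕ) (p q : Polynomial ℂ) {n : ℕ} (hn : n ≤ d) :
    (ffAdd d p q).coeff n = (-1) ^ (d - n) * (d.choose (d - n) : ℂ) *
      ∑ i ∈ range (d - n + 1), ((d - n).choose i : ℂ) * etilde d p i * etilde d q (d - n - i) := by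
  unfold ffAdd
  rw [finset_sum_coeff]
  rw [Finset.sum_eq_single (d - n)]
  · rw [coeff_C_mul, coeff_X_pow, show d - (d - n) = n by omega, if_pos rfl, mul_one]
  · intro k hk hne
    simp only [mem_range] at hk
    rw [coeff_C_mul, coeff_X_pow, if_neg (by omega), mul_zero]
  · intro h
    exact absurd (mem_range.2 (by omega)) h

lemma coeff_eq_zero_of_lt_rootMultiplicity {p : Polynomial ℂ} {n m : ℕ}
    (h : p.rootMultiplicity 0 = m) (hn : n < m) : p.coeff n = 0 := by
  have hdvd : X ^ m ∣ p := by
    have := p.pow_rootMultiplicity_dvd 0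
    rwa [C_0, sub_zero, h] at this
  exact X_pow_dvd_iff.1 hdvd n hn

lemma coeff_rootMultiplicity_ne_zero {p : Polynomial ℂ} {m : ℕ} (hp : p ≠ 0)
    (h : p.rootMultiplicity 0 = m) : p.coeff m ≠ 0 := by
  intro hc
  have hdvd : X ^ (m + 1) ∣ p := by
    rw [X_pow_dvd_iff]
    intro k hk
    rcases Nat.lt_succ_iff_lt_or_eq.1 hk with hk' | rfl
    · exact coeff_eq_zero_of_lt_rootMultiplicity h hk'
    · exact hc
  have := (rootMultiplicity_le_iff hp 0 m).1 (le_of_eq h)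
  rw [C_0, sub_zero] at this
  exact this hdvd

lemma ffAdd_rootMultiplicity_zero (d : ℕ) (p q : Polynomial ℂ) (hp : p ≠ 0) (hq : q ≠ 0)
    (mα mβ : ℕ) (hα : p.rootMultiplicity 0 = mα) (hβ : q.rootMultiplicity 0 = mβ)
    (hαd : mα ≤ d) (hβd : mβ ≤ d) (hm : d ≤ mα + mβ) :
    (ffAdd d p q).rootMultiplicity 0 = mα + mβ - d := by
  set m := mα + mβ - d with hmdef
  have hmα : m ≤ mα := by omega
  have hmβ : m ≤ mβ := by omega
  -- etilde vanishing
  have hep : ∀ i : ℕ, d - mα < i → i ≤ d → etilde d p i = 0 := by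
    intro i h1 h2
    unfold etilde
    rw [coeff_eq_zero_of_lt_rootMultiplicity hα (by omega)]
    simp
  have heq : ∀ i : ℕ, d - mβ < i → i ≤ d → etilde d q i = 0 := by
    intro i h1 h2
    unfold etilde
    rw [coeff_eq_zero_of_lt_rootMultiplicity hβ (by omega)]
    simp
  -- coefficients below m vanish
  have hlow : ∀ n : ℕ, n < m → (ffAdd d p q).coeff n = 0 := by
    intro n hn
    rw [ffAdd_coeff d p q (by omega)]
    rw [Finset.sum_eq_zero, mul_zero]
    intro i hi
    simp only [mem_range] at hi
    by_cases hip : i ≤ d - mα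
    · rw [heq (d - n - i) (by omega) (by omega), mul_zero]
    · rw [hep i (by omega) (by omega)]
      ring
  -- coefficient at m is nonzero
  have hcm : (ffAdd d p q).coeff m ≠ 0 := by
    rw [ffAdd_coeff d p q (by omega)]
    have hsum : ∑ i ∈ range (d - m + 1), ((d - m).choose i : ℂ) * etilde d p i * etilde d q (d - m - i)
        = ((d - m).choose (d - mα) : ℂ) * etilde d p (d - mα) * etilde d q (d - mβ) := by
      rw [Finset.sum_eq_single (d - mα)]
      · rw [show d - m - (d - mα) = d - mβ by omega]
      · intro i hi hne
        simp only [mem_range] at hi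
        by_cases hip : i ≤ d - mα
        · have : d - mβ < d - m - i := by omega
          rw [heq (d - m - i) this (by omega), mul_zero]
        · rw [hep i (by omega) (by omega)]
          ring
      · intro h
        exact absurd (mem_range.2 (by omega)) h
    rw [hsum]
    have h1 : ((-1 : ℂ)) ^ (d - m) ≠ 0 := by
      simp
    have h2 : ((d.choose (d - m) : ℕ) : ℂ) ≠ 0 :=
      Nat.cast_ne_zero.2 (Nat.choose_pos (by omega)).ne'
    have h3 : (((d - m).choose (d - mα) : ℕ) : ℂ) ≠ 0 :=
      Nat.cast_ne_zero.2 (Nat.choose_pos (by omega)).ne'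
    have h4 : etilde d p (d - mα) ≠ 0 := by
      unfold etilde
      rw [show d - (d - mα) = mα by omega]
      exact div_ne_zero (mul_ne_zero (by simp) (coeff_rootMultiplicity_ne_zero hp hα))
        (Nat.cast_ne_zero.2 (Nat.choose_pos (by omega)).ne')
    have h5 : etilde d q (d - mβ) ≠ 0 := by
      unfold etilde
      rw [show d - (d - mβ) = mβ by omega]
      exact div_ne_zero (mul_ne_zero (by simp) (coeff_rootMultiplicity_ne_zero hq hβ))
        (Nat.cast_ne_zero.2 (Nat.choose_pos (by omega)).ne')
    exact mul_ne_zero (mul_ne_zero h1 h2) (mul_ne_zero (mul_ne_zero h3 h4) h5)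
  -- conclude
  have hF : ffAdd d p q ≠ 0 := fun h => hcm (by simp [h])
  refine le_antisymm ?_ ?_
  · rw [rootMultiplicity_le_iff hF, C_0, sub_zero]
    intro hdvd
    exact hcm (X_pow_dvd_iff.1 hdvd m (Nat.lt_succ_self m))
  · rw [le_rootMultiplicity_iff hF, C_0, sub_zero, X_pow_dvd_iff]
    exact fun k hk => hlow k hk

theorem ffAdd_rootMultiplicity (d : ℕ) (p q : Polynomial ℂ)
    (hp : p.Monic) (hq : q.Monic) (hpd : p.natDegree = d) (hqd : q.natDegree = d)
    (α β : ℂ) (mα mβ : ℕ)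
    (hα : p.rootMultiplicity α = mα) (hβ : q.rootMultiplicity β = mβ)
    (hm : d ≤ mα + mβ) :
    (ffAdd d p q).rootMultiplicity (α + β) = mα + mβ - d := by
  have hp0 : p ≠ 0 := hp.ne_zero
  have hq0 : q ≠ 0 := hq.ne_zero
  have hαd : mα ≤ d := by
    have h1 : ((X - C α) ^ mα : Polynomial ℂ) ∣ p := hα ▸ p.pow_rootMultiplicity_dvd α
    have h2 := Polynomial.natDegree_le_of_dvd h1 hp0
    rwa [natDegree_pow, natDegree_X_sub_C, mul_one, hpd] at h2
  have hβd : mβ ≤ d := by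
    have h1 : ((X - C β) ^ mβ : Polynomial ℂ) ∣ q := hβ ▸ q.pow_rootMultiplicity_dvd β
    have h2 := Polynomial.natDegree_le_of_dvd h1 hq0
    rwa [natDegree_pow, natDegree_X_sub_C, mul_one, hqd] at h2
  rw [rootMultiplicity_eq_rootMultiplicity, ← ffAdd_comp d p q (le_of_eq hpd) (le_of_eq hqd) α β]
  refine ffAdd_rootMultiplicity_zero d _ _ ?_ ?_ mα mβ ?_ ?_ hαd hβd hm
  · exact comp_X_add_C_ne_zero_iff.2 hp0
  · exact comp_X_add_C_ne_zero_iff.2 hq0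
  · rw [← rootMultiplicity_eq_rootMultiplicity, hα]
  · rw [← rootMultiplicity_eq_rootMultiplicity, hβ]
end

section
/- Let p, q be monic complex polynomials of degree d such that α ≠ 0 is a root of p of multiplicity m_α and β ≠ 0 is a root of q of multiplicity m_β, with m := m_α + m_β - d ≥ 0. Then αβ is a root of the finite free multiplicative convolution p ⊠_d q of multiplicity exactly m. -/
open Polynomial Finset

/-- The finite free multiplicative convolution of two degree-`d` polynomials, defined by
`ẽ_k(p ⊠_d q) = ẽ_k(p) ẽ_k(q)`. -/
noncomputable def ffMul (d : ℕ) (p q : Polynomial ℂ) : Polynomial ℂ :=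
  ∑ k ∈ range (d + 1),
    C ((-1) ^ k * (d.choose k : ℂ) * (etilde d p k * etilde d q k)) * X ^ (d - k)


private lemma aux_factor (f : Polynomial ℂ) (a : ℂ) (m : ℕ) (hf : f ≠ 0)
    (hmul : f.rootMultiplicity a = m) :
    ∃ u : Polynomial ℂ, f = (X - C a) ^ m * u ∧ u.eval a ≠ 0 := by
  subst hmul
  exact ⟨f /ₘ (X - C a) ^ (f.rootMultiplicity a),
    (pow_mul_divByMonic_rootMultiplicity_eq f a).symm,
    eval_divByMonic_pow_rootMultiplicity_ne_zero a hf⟩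

private lemma aux_mult_eq (a : ℂ) (m : ℕ) (u : Polynomial ℂ) (hu : u.eval a ≠ 0) :
    rootMultiplicity a ((X - C a) ^ m * u) = m := by
  have hu0 : u ≠ 0 := fun h => hu (by simp [h])
  have h1 : (X - C a : Polynomial ℂ) ^ m ≠ 0 := pow_ne_zero _ (X_sub_C_ne_zero a)
  rw [rootMultiplicity_mul (mul_ne_zero h1 hu0), rootMultiplicity_X_sub_C_pow,
    rootMultiplicity_eq_zero (by simpa [IsRoot] using hu), add_zero]

private lemma aux_iter (a : ℂ) :
    ∀ (k : ℕ) (f : Polynomial ℂ) (m : ℕ), f ≠ 0 → f.rootMultiplicity a = m → k ≤ m →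
      derivative^[k] f ≠ 0 ∧ (derivative^[k] f).rootMultiplicity a = m - k := by
  intro k
  induction k with
  | zero => intro f m hf hm _; simpa using ⟨hf, hm⟩
  | succ k ih =>
    intro f m hf hm hk
    obtain ⟨hg, hgm⟩ := ih f m hf hm (Nat.le_of_succ_le hk)
    set g := derivative^[k] f with hgdef
    have hpos : 0 < g.rootMultiplicity a := by rw [hgm]; omega
    have hroot : g.IsRoot a := (rootMultiplicity_pos hg).mp hpos
    have hdm : (derivative g).rootMultiplicity a = m - (k + 1) := by
      rw [derivative_rootMultiplicity_of_root hroot, hgm]; omega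
    have hdeg : 1 ≤ g.natDegree := by
      have h2 := natDegree_le_of_dvd (pow_rootMultiplicity_dvd g a) hg
      rw [natDegree_pow, natDegree_X_sub_C, mul_one] at h2
      omega
    have hder : derivative g ≠ 0 := by
      intro h
      have := natDegree_eq_zero_of_derivative_eq_zero h
      omega
    rw [Function.iterate_succ_apply']
    exact ⟨hder, hdm⟩

private lemma aux_natDegree_reflect_le (N : ℕ) (f : Polynomial ℂ) (h : f.natDegree ≤ N) :
    (reflect N f).natDegree ≤ N := by
  rw [natDegree_le_iff_coeff_eq_zero]
  intro i hi
  rw [coeff_reflect]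
  have hrev : (revAt N) i = i := by
    rw [← revAtFun_eq]
    unfold revAtFun
    rw [if_neg (by omega)]
  rw [hrev]
  exact coeff_eq_zero_of_natDegree_lt (by omega)

private lemma aux_reflect_pow (b : ℂ) (n : ℕ) :
    reflect n ((X - C b) ^ n) = (1 - C b * X) ^ n := by
  induction n with
  | zero => simp
  | succ n ih =>
    have h1 : ((X - C b) ^ n : Polynomial ℂ).natDegree ≤ n := by
      rw [natDegree_pow, natDegree_X_sub_C, mul_one]
    have h2 : (X - C b : Polynomial ℂ).natDegree ≤ 1 := (natDegree_X_sub_C b).le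
    have h3 : reflect 1 (X - C b : Polynomial ℂ) = 1 - C b * X := by
      rw [reflect_sub, reflect_C]
      have : reflect 1 (X : Polynomial ℂ) = 1 := by
        have := reflect_monomial 1 1 (R := ℂ)
        simpa using this
      rw [this, pow_one]
    calc reflect (n + 1) ((X - C b) ^ (n + 1))
        = reflect (n + 1) ((X - C b) ^ n * (X - C b)) := by rw [pow_succ]
      _ = reflect n ((X - C b) ^ n) * reflect 1 (X - C b) := reflect_mul _ _ h1 h2
      _ = (1 - C b * X) ^ n * (1 - C b * X) := by rw [ih, h3]
      _ = (1 - C b * X) ^ (n + 1) := (pow_succ _ _).symm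


private lemma aux_concomitant (d : ℕ) (f g : Polynomial ℂ) (hf : f.natDegree ≤ d)
    (hg : g.natDegree ≤ d) (b : ℂ) :
    ∑ k ∈ range (d + 1),
        C ((-1) ^ k * (Nat.factorial k : ℂ) * (Nat.factorial (d - k) : ℂ) * (f.coeff k * g.coeff (d - k))) * X ^ k
      = ∑ k ∈ range (d + 1),
        C ((-1) ^ k * ((derivative^[d - k] g).eval b)) * X ^ k
          * ((derivative^[k] f).comp (C b * X)) := by
  classical
  let fz : Polynomial (Polynomial ℂ) := (f.map (C : ℂ →+* Polynomial ℂ)).comp (C (X : Polynomial ℂ) * X)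
  let gz : Polynomial (Polynomial ℂ) := g.map (C : ℂ →+* Polynomial ℂ)
  -- iterated derivatives of fz
  have hfz : ∀ k : ℕ, derivative^[k] fz
      = C ((X : Polynomial ℂ)) ^ k * (((derivative^[k] f).map (C : ℂ →+* Polynomial ℂ)).comp (C (X : Polynomial ℂ) * X)) := by
    intro k
    induction k with
    | zero => simp [fz]
    | succ k ih =>
      rw [Function.iterate_succ_apply', ih, ← map_pow, derivative_mul, derivative_C,
        zero_mul, zero_add, derivative_comp, derivative_C_mul_X, derivative_map,
        ← Function.iterate_succ_apply' derivative k, map_pow, pow_succ]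
      ring
  have hfzd : fz.natDegree ≤ d := by
    refine natDegree_comp_le.trans ?_
    have h1 : (C (X : Polynomial ℂ) * X).natDegree ≤ 1 := natDegree_mul_le.trans (by simp)
    have h2 : (f.map (C : ℂ →+* Polynomial ℂ)).natDegree ≤ d := natDegree_map_le.trans hf
    calc (f.map (C : ℂ →+* Polynomial ℂ)).natDegree * (C (X : Polynomial ℂ) * X).natDegree
        ≤ d * 1 := Nat.mul_le_mul h2 h1
      _ = d := mul_one d
  have hgzd : gz.natDegree ≤ d := natDegree_map_le.trans hg
  set T : Polynomial (Polynomial ℂ) :=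
    ∑ k ∈ range (d + 1), C ((-1 : Polynomial ℂ) ^ k) * (derivative^[k] fz * derivative^[d - k] gz)
    with hT
  have hdT : derivative T = 0 := by
    have hstep : ∀ k ∈ range (d + 1),
        derivative (C ((-1 : Polynomial ℂ) ^ k) * (derivative^[k] fz * derivative^[d - k] gz))
          = (fun k => C ((-1 : Polynomial ℂ) ^ k) * (derivative^[k] fz * derivative^[d + 1 - k] gz)) k
            - (fun k => C ((-1 : Polynomial ℂ) ^ k) * (derivative^[k] fz * derivative^[d + 1 - k] gz)) (k + 1) := by
      intro k hk
      have hkd : k ≤ d := by simpa [Nat.lt_succ_iff] using hk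
      have e1 : d + 1 - k = (d - k) + 1 := by omega
      have e2 : d + 1 - (k + 1) = d - k := by omega
      simp only [e1, e2]
      rw [derivative_C_mul, derivative_mul, Function.iterate_succ_apply' derivative (d - k) gz,
        Function.iterate_succ_apply' derivative k fz, pow_succ, map_mul, map_neg, map_one]
      ring
    rw [hT, derivative_sum, Finset.sum_congr rfl hstep, Finset.sum_range_sub']
    have hz1 : derivative^[d + 1] gz = 0 := iterate_derivative_eq_zero (by omega)
    have hz2 : derivative^[d + 1] fz = 0 := iterate_derivative_eq_zero (by omega)
    simp [hz1, hz2]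
  have hTC : T = C (T.coeff 0) := eq_C_of_derivative_eq_zero hdT
  have hev : T.eval 0 = T.eval (C b) := by rw [hTC]; simp
  -- evaluate at 0
  have heval0 : T.eval 0
      = ∑ k ∈ range (d + 1),
          C ((-1) ^ k * (Nat.factorial k : ℂ) * (Nat.factorial (d - k) : ℂ) * (f.coeff k * g.coeff (d - k))) * X ^ k := by
    rw [hT, eval_finset_sum]
    refine Finset.sum_congr rfl fun k hk => ?_
    rw [eval_mul, eval_C, eval_mul]
    have h1 : (derivative^[k] fz).eval 0 = X ^ k * C ((Nat.factorial k : ℂ) * f.coeff k) := by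
      rw [hfz k, eval_mul, eval_pow, eval_C, eval_comp, eval_mul, eval_C, eval_X, mul_zero,
        ← coeff_zero_eq_eval_zero, coeff_map, coeff_iterate_derivative]
      simp [Nat.descFactorial_self, nsmul_eq_mul]
    have h2 : (derivative^[d - k] gz).eval 0 = C ((Nat.factorial (d - k) : ℂ) * g.coeff (d - k)) := by
      rw [show derivative^[d - k] gz = (derivative^[d - k] g).map (C : ℂ →+* Polynomial ℂ) from
          iterate_derivative_map g (C : ℂ →+* Polynomial ℂ) (d - k),
        ← coeff_zero_eq_eval_zero, coeff_map, coeff_iterate_derivative]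
      simp [Nat.descFactorial_self, nsmul_eq_mul]
    rw [h1, h2]
    have h3 : ((-1 : Polynomial ℂ) ^ k) = C ((-1 : ℂ) ^ k) := by simp
    rw [h3]
    simp only [map_mul]
    ring
  -- evaluate at C b
  have hevalb : T.eval (C b)
      = ∑ k ∈ range (d + 1),
          C ((-1) ^ k * ((derivative^[d - k] g).eval b)) * X ^ k
            * ((derivative^[k] f).comp (C b * X)) := by
    rw [hT, eval_finset_sum]
    refine Finset.sum_congr rfl fun k hk => ?_
    rw [eval_mul, eval_C, eval_mul]
    have h1 : (derivative^[k] fz).eval (C b) = X ^ k * ((derivative^[k] f).comp (C b * X)) := by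
      rw [hfz k, eval_mul, eval_pow, eval_C, eval_comp, eval_mul, eval_C, eval_X]
      rw [eval_map]
      congr 1
      rw [mul_comm (X : Polynomial ℂ) (C b)]
      rfl
    have h2 : (derivative^[d - k] gz).eval (C b) = C ((derivative^[d - k] g).eval b) := by
      rw [show derivative^[d - k] gz = (derivative^[d - k] g).map (C : ℂ →+* Polynomial ℂ) from
          iterate_derivative_map g (C : ℂ →+* Polynomial ℂ) (d - k),
        eval_map, eval₂_at_apply]
    rw [h1, h2]
    have h3 : ((-1 : Polynomial ℂ) ^ k) = C ((-1 : ℂ) ^ k) := by simp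
    rw [h3]
    simp only [map_mul]
    ring
  rw [← heval0, hev, hevalb]

private lemma aux_scalar (j r : ℕ) (a b : ℂ) :
    (-1 : ℂ) ^ (j + r) * (Nat.factorial (j + r) : ℂ)
        * ((-1) ^ r * ((j + r).choose r : ℂ)
          * ((-1) ^ r * a / ((j + r).choose r : ℂ) * ((-1) ^ r * b / ((j + r).choose r : ℂ))))
      = (-1) ^ j * (Nat.factorial j : ℂ) * (Nat.factorial r : ℂ) * (a * b) := by
  have hc : (((j + r).choose r : ℕ) : ℂ) ≠ 0 :=
    Nat.cast_ne_zero.mpr (Nat.choose_pos (by omega)).ne'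
  have hfac : (((j + r).choose r : ℕ) : ℂ) * (Nat.factorial r : ℂ) * (Nat.factorial j : ℂ)
      = (Nat.factorial (j + r) : ℂ) := by
    have h5 := Nat.choose_mul_factorial_mul_factorial (show r ≤ j + r by omega)
    have h6 : j + r - r = j := by omega
    rw [h6] at h5
    exact_mod_cast congrArg (Nat.cast : ℕ → ℂ) h5
  have hsq : ((-1 : ℂ)) ^ r * (-1) ^ r = 1 := by
    rw [← pow_add]; exact Even.neg_one_pow ⟨r, rfl⟩
  have hsign : (-1 : ℂ) ^ (j + r) = (-1) ^ j * (-1) ^ r := by rw [pow_add]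
  have h2 : ((-1 : ℂ)) ^ (r * 2) = 1 := by rw [pow_mul, sq, hsq]
  have h4 : ((-1 : ℂ)) ^ (r * 4) = 1 := by
    rw [show r * 4 = r * 2 + r * 2 by ring, pow_add, h2, one_mul]
  rw [hsign, ← hfac]
  field_simp
  ring_nf
  rw [h4, mul_one]

theorem ffMul_rootMultiplicity (d : ℕ) (p q : Polynomial ℂ)
    (hp : p.Monic) (hq : q.Monic) (hpd : p.natDegree = d) (hqd : q.natDegree = d)
    (α β : ℂ) (hα0 : α ≠ 0) (hβ0 : β ≠ 0) (mα mβ : ℕ)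
    (hα : p.rootMultiplicity α = mα) (hβ : q.rootMultiplicity β = mβ)
    (hm : d ≤ mα + mβ) :
    (ffMul d p q).rootMultiplicity (α * β) = mα + mβ - d := by
  classical
  have hp0 : p ≠ 0 := hp.ne_zero
  have hq0 : q ≠ 0 := hq.ne_zero
  have hmαd : mα ≤ d := by
    have h1 := natDegree_le_of_dvd (pow_rootMultiplicity_dvd p α) hp0
    rwa [natDegree_pow, natDegree_X_sub_C, mul_one, hα, hpd] at h1
  have hmβd : mβ ≤ d := by
    have h1 := natDegree_le_of_dvd (pow_rootMultiplicity_dvd q β) hq0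
    rwa [natDegree_pow, natDegree_X_sub_C, mul_one, hβ, hqd] at h1
  set γ : ℂ := α * β with hγ
  set m : ℕ := mα + mβ - d with hmdef
  set K : ℕ := d - mβ with hKdef
  have hKmα : K ≤ mα := by omega
  have hKm : m + K = mα := by omega
  -- ### factor q
  obtain ⟨v, hv, hvβ⟩ := aux_factor q β mβ hq0 hβ
  have hv0 : v ≠ 0 := fun h => hvβ (by simp [h])
  have hvdeg : v.natDegree = d - mβ := by
    have h1 := natDegree_mul (pow_ne_zero mβ (X_sub_C_ne_zero β)) hv0
    rw [← hv, hqd, natDegree_pow, natDegree_X_sub_C, mul_one] at h1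
    omega
  -- ### the reflected polynomial g
  set g : Polynomial ℂ := reflect d q with hgdef
  have hgd : g.natDegree ≤ d := aux_natDegree_reflect_le d q (le_of_eq hqd)
  have hgfac : g = (X - C β⁻¹) ^ mβ * (C ((-β) ^ mβ) * reflect (d - mβ) v) := by
    have h1 : ((X - C β) ^ mβ : Polynomial ℂ).natDegree ≤ mβ := by
      rw [natDegree_pow, natDegree_X_sub_C, mul_one]
    have h2 : v.natDegree ≤ d - mβ := le_of_eq hvdeg
    have e : mβ + (d - mβ) = d := by omega
    rw [hgdef, hv, ← e, reflect_mul _ _ h1 h2]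
    have h3 : reflect mβ ((X - C β) ^ mβ) = (1 - C β * X) ^ mβ := aux_reflect_pow β mβ
    have h4 : (1 - C β * X : Polynomial ℂ) = C (-β) * (X - C β⁻¹) := by
      rw [mul_sub, ← C_mul]
      have : -β * β⁻¹ = -1 := by field_simp
      rw [this]
      simp
      ring
    rw [h3, h4, mul_pow, ← C_pow, Nat.add_sub_cancel_left]
    ring
  have hregv : (reflect (d - mβ) v).eval β⁻¹ ≠ 0 := by
    letI := invertibleOfNonzero hβ0
    have h := eval₂_reflect_mul_pow (RingHom.id ℂ) β (d - mβ) v (le_of_eq hvdeg)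
    rw [invOf_eq_inv] at h
    change (reflect (d - mβ) v).eval β⁻¹ * β ^ (d - mβ) = v.eval β at h
    intro h0
    rw [h0, zero_mul] at h
    exact hvβ h.symm
  have hw : ((C ((-β) ^ mβ) * reflect (d - mβ) v : Polynomial ℂ)).eval β⁻¹ ≠ 0 := by
    rw [eval_mul, eval_C]
    exact mul_ne_zero (pow_ne_zero _ (neg_ne_zero.2 hβ0)) hregv
  have hgmul : g.rootMultiplicity β⁻¹ = mβ := by rw [hgfac]; exact aux_mult_eq _ _ _ hw
  have hg0 : g ≠ 0 := by
    rw [hgfac]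
    exact mul_ne_zero (pow_ne_zero _ (X_sub_C_ne_zero _)) (fun h => hw (by rw [h]; simp))
  -- ### vanishing of the g-side coefficients beyond K
  have hczero : ∀ k, k ≤ d → K < k → (derivative^[d - k] g).eval β⁻¹ = 0 := by
    intro k hkd hKk
    obtain ⟨hne, hmul2⟩ := aux_iter β⁻¹ (d - k) g mβ hg0 hgmul (by omega)
    have hpos : 0 < (derivative^[d - k] g).rootMultiplicity β⁻¹ := by rw [hmul2]; omega
    exact (rootMultiplicity_pos hne).mp hpos
  have hcK : (derivative^[d - K] g).eval β⁻¹ ≠ 0 := by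
    have hdK : d - K = mβ := by omega
    obtain ⟨hne, hmul2⟩ := aux_iter β⁻¹ mβ g mβ hg0 hgmul le_rfl
    rw [hdK]
    intro h0
    have hpos := (rootMultiplicity_pos hne).mpr h0
    rw [hmul2] at hpos
    omega
  -- ### p-side factorizations
  set u : ℕ → Polynomial ℂ := fun k => derivative^[k] p /ₘ (X - C α) ^ (mα - k) with hu
  have hpk : ∀ k, k ≤ K → derivative^[k] p = (X - C α) ^ (mα - k) * u k ∧ (u k).eval α ≠ 0 := by
    intro k hk
    obtain ⟨hne, hmul2⟩ := aux_iter α k p mα hp0 hα (le_trans hk hKmα)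
    constructor
    · show derivative^[k] p
        = (X - C α) ^ (mα - k) * (derivative^[k] p /ₘ (X - C α) ^ (mα - k))
      conv_lhs => rw [← pow_mul_divByMonic_rootMultiplicity_eq (derivative^[k] p) α]
      rw [hmul2]
    · have h2 := eval_divByMonic_pow_rootMultiplicity_ne_zero α hne
      show (derivative^[k] p /ₘ (X - C α) ^ (mα - k)).eval α ≠ 0
      rwa [hmul2] at h2
  -- ### the concomitant identity
  have hconc := aux_concomitant d p g (le_of_eq hpd) hgd β⁻¹
  have hgcoeff : ∀ k, k ∈ range (d + 1) → g.coeff (d - k) = q.coeff k := by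
    intro k hk
    have hkd : k ≤ d := by simpa [Nat.lt_succ_iff] using hk
    rw [hgdef, coeff_reflect, revAt_le (Nat.sub_le d k)]
    congr 1
    omega
  -- ### relating ffMul to the LHS of the concomitant
  have claim8 : C ((-1 : ℂ) ^ d * (Nat.factorial d : ℂ)) * ffMul d p q
      = ∑ k ∈ range (d + 1),
          C ((-1) ^ k * (Nat.factorial k : ℂ) * (Nat.factorial (d - k) : ℂ)
            * (p.coeff k * g.coeff (d - k))) * X ^ k := by
    rw [ffMul, Finset.mul_sum]
    rw [← Finset.sum_range_reflect
      (fun k => C ((-1 : ℂ) ^ d * (Nat.factorial d : ℂ))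
        * (C ((-1) ^ k * (d.choose k : ℂ) * (etilde d p k * etilde d q k)) * X ^ (d - k))) (d + 1)]
    refine Finset.sum_congr rfl fun j hj => ?_
    have hjd : j ≤ d := by simpa [Nat.lt_succ_iff] using hj
    have e1 : d + 1 - 1 - j = d - j := by omega
    have e2 : d - (d - j) = j := by omega
    rw [e1, hgcoeff j hj, e2, etilde, etilde, e2]
    rw [← mul_assoc, ← C_mul]
    congr 1
    rw [C_inj]
    have h5 := aux_scalar j (d - j) (p.coeff j) (q.coeff j)
    rw [show j + (d - j) = d by omega] at h5
    exact h5
  -- ### restrict the sum to k ≤ K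
  have hrestrict : (∑ k ∈ range (d + 1),
        C ((-1) ^ k * ((derivative^[d - k] g).eval β⁻¹)) * X ^ k
          * ((derivative^[k] p).comp (C β⁻¹ * X)))
      = ∑ k ∈ range (K + 1),
        C ((-1) ^ k * ((derivative^[d - k] g).eval β⁻¹)) * X ^ k
          * ((derivative^[k] p).comp (C β⁻¹ * X)) := by
    symm
    apply Finset.sum_subset (Finset.range_subset_range.mpr (by omega))
    intro k hk1 hk2
    have hkd : k ≤ d := by simpa [Nat.lt_succ_iff] using hk1
    have hKk : K < k := by
      simp only [Finset.mem_range, Nat.lt_succ_iff, not_le] at hk2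
      omega
    rw [hczero k hkd hKk]
    simp
  -- ### pull out the factor (X - C γ) ^ m
  have hfactor : (∑ k ∈ range (K + 1),
        C ((-1) ^ k * ((derivative^[d - k] g).eval β⁻¹)) * X ^ k
          * ((derivative^[k] p).comp (C β⁻¹ * X)))
      = (X - C γ) ^ m * ∑ k ∈ range (K + 1),
          C ((-1) ^ k * ((derivative^[d - k] g).eval β⁻¹) * β⁻¹ ^ (mα - k)) * X ^ k
            * ((X - C γ) ^ (K - k) * (u k).comp (C β⁻¹ * X)) := by
    rw [Finset.mul_sum]
    refine Finset.sum_congr rfl fun k hk => ?_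
    have hkK : k ≤ K := by simpa [Nat.lt_succ_iff] using hk
    obtain ⟨hfk, hek⟩ := hpk k hkK
    rw [hfk, mul_comp, pow_comp, sub_comp, X_comp, C_comp]
    have hlin : (C β⁻¹ * X - C α : Polynomial ℂ) = C β⁻¹ * (X - C γ) := by
      rw [mul_sub, ← C_mul]
      congr 2
      rw [hγ]
      field_simp
    have hexp : mα - k = m + (K - k) := by omega
    rw [hlin]
    simp only [hexp, mul_pow, pow_add, map_mul, map_pow]
    ring
  set Rp : Polynomial ℂ := ∑ k ∈ range (K + 1),
      C ((-1) ^ k * ((derivative^[d - k] g).eval β⁻¹) * β⁻¹ ^ (mα - k)) * X ^ k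
        * ((X - C γ) ^ (K - k) * (u k).comp (C β⁻¹ * X)) with hRp
  -- ### Rp does not vanish at γ
  have hReval : Rp.eval γ = (-1) ^ K * ((derivative^[d - K] g).eval β⁻¹) * β⁻¹ ^ (mα - K)
      * γ ^ K * ((u K).eval α) := by
    rw [hRp, eval_finset_sum, Finset.sum_eq_single K]
    · have hβγ : β⁻¹ * γ = α := by rw [hγ]; field_simp
      rw [eval_mul, eval_mul, eval_C, eval_pow, eval_X, eval_mul, eval_pow, eval_comp,
        eval_mul, eval_C, eval_X, hβγ, Nat.sub_self, pow_zero]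
      ring
    · intro k hk hkK
      have hkK' : k < K := by
        have : k ≤ K := by simpa [Nat.lt_succ_iff] using hk
        omega
      simp only [eval_mul, eval_pow, eval_sub, eval_X, eval_C, sub_self]
      rw [zero_pow (by omega : K - k ≠ 0)]
      ring
    · intro hK
      exact absurd (Finset.self_mem_range_succ K) hK
  have hRne : Rp.eval γ ≠ 0 := by
    rw [hReval]
    have h1 : ((-1 : ℂ)) ^ K ≠ 0 := pow_ne_zero _ (by norm_num)
    have h2 : (β⁻¹ : ℂ) ^ (mα - K) ≠ 0 := pow_ne_zero _ (inv_ne_zero hβ0)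
    have h3 : γ ^ K ≠ 0 := pow_ne_zero _ (by rw [hγ]; exact mul_ne_zero hα0 hβ0)
    have h4 : (u K).eval α ≠ 0 := (hpk K le_rfl).2
    exact mul_ne_zero (mul_ne_zero (mul_ne_zero (mul_ne_zero h1 hcK) h2) h3) h4
  -- ### conclude
  have hSfinal : C ((-1 : ℂ) ^ d * (Nat.factorial d : ℂ)) * ffMul d p q
      = (X - C γ) ^ m * Rp := by
    rw [claim8, hconc, hrestrict, hfactor, hRp]
  have hrm : rootMultiplicity γ ((X - C γ) ^ m * Rp) = m := aux_mult_eq γ m Rp hRne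
  have hRp0 : Rp ≠ 0 := fun h => hRne (by rw [h]; simp)
  have hprod0 : C ((-1 : ℂ) ^ d * (Nat.factorial d : ℂ)) * ffMul d p q ≠ 0 := by
    rw [hSfinal]
    exact mul_ne_zero (pow_ne_zero _ (X_sub_C_ne_zero γ)) hRp0
  have hsplit := rootMultiplicity_mul (x := γ) hprod0
  rw [hSfinal] at hsplit
  rw [hrm, rootMultiplicity_C] at hsplit
  omega
end

section
/- Fix a degree d and define r^(k)(x) = (x D / d)^k applied to (x-1)^d, where D = d/dx. Then the set {r^(0), r^(1), ..., r^(d)} is a basis of the complex vector space of polynomials of degree at most d. -/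
open Polynomial

/-- `r^(k) = (x D / d)^k (x-1)^d`. -/
noncomputable def rpoly (d k : ℕ) : Polynomial ℂ :=
  (fun f => Polynomial.C ((d : ℂ))⁻¹ * (Polynomial.X * Polynomial.derivative f))^[k]
    ((Polynomial.X - 1) ^ d)

lemma coeff_rpoly (d k m : ℕ) :
    (rpoly d k).coeff m = ((m : ℂ) / d) ^ k * (((X : ℂ[X]) - 1) ^ d).coeff m := by
  induction k with
  | zero => simp [rpoly]
  | succ k ih =>
    have hs : rpoly d (k + 1) =
        Polynomial.C ((d : ℂ))⁻¹ * (Polynomial.X * Polynomial.derivative (rpoly d k)) := by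
      rw [rpoly, Function.iterate_succ_apply']; rfl
    cases m with
    | zero =>
      simp [hs, mul_coeff_zero]
    | succ n =>
      rw [hs, coeff_C_mul, coeff_X_mul, coeff_derivative, ih]
      push_cast
      by_cases hd : (d : ℂ) = 0
      · simp [hd]
      · field_simp
        have h1 : (d : ℂ) * (((n : ℂ) + 1) / d) = (n : ℂ) + 1 := mul_div_cancel₀ _ hd
        linear_combination (-((((X : ℂ[X]) - 1) ^ d).coeff (n + 1) * (((n : ℂ) + 1) / d) ^ k)) * h1

lemma coeff_base (d m : ℕ) :
    (((X : ℂ[X]) - 1) ^ d).coeff m = (-1 : ℂ) ^ (d - m) * (d.choose m : ℂ) := by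
  have : ((X : ℂ[X]) - 1) = X + C (-1) := by simp [sub_eq_add_neg]
  rw [this, coeff_X_add_C_pow]

lemma rpoly_mem (d k : ℕ) : rpoly d k ∈ degreeLT ℂ (d + 1) := by
  rw [Polynomial.mem_degreeLT]
  have : Polynomial.degree (rpoly d k) < (d + 1 : ℕ) := by
    rw [Polynomial.degree_lt_iff_coeff_zero]
    intro m hm
    rw [coeff_rpoly, coeff_base, Nat.choose_eq_zero_of_lt (by exact_mod_cast hm)]
    simp
  exact_mod_cast this

theorem rpoly_basis (d : ℕ) (hd : 0 < d) :
    LinearIndependent ℂ (fun k : Fin (d + 1) => rpoly d k) ∧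
      Submodule.span ℂ (Set.range (fun k : Fin (d + 1) => rpoly d k)) =
        Polynomial.degreeLT ℂ (d + 1) := by
  have hdC : (d : ℂ) ≠ 0 := Nat.cast_ne_zero.mpr hd.ne'
  -- the Vandermonde nodes
  set v : Fin (d + 1) → ℂ := fun m => (m : ℂ) / d with hv
  have hvinj : Function.Injective v := by
    intro a b hab
    have : (a : ℂ) = (b : ℂ) := by
      simp only [hv, div_left_inj' hdC] at hab; exact_mod_cast hab
    exact_mod_cast Fin.ext (by exact_mod_cast this)
  have hdet : (Matrix.vandermonde v).det ≠ 0 :=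
    Matrix.det_vandermonde_ne_zero_iff.mpr hvinj
  have hli : LinearIndependent ℂ (fun k : Fin (d + 1) => rpoly d k) := by
    rw [Fintype.linearIndependent_iff]
    intro c hc k
    have hvan : (Matrix.vandermonde v).mulVec c = 0 := by
      funext m
      have hcoeff := congrArg (fun p => Polynomial.coeff p m) hc
      simp only [Polynomial.finset_sum_coeff, Polynomial.coeff_smul, smul_eq_mul,
        Polynomial.coeff_zero] at hcoeff
      have hB : (((X : ℂ[X]) - 1) ^ d).coeff m ≠ 0 := by
        rw [coeff_base]
        have : (d.choose m : ℂ) ≠ 0 := by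
          exact_mod_cast Nat.cast_ne_zero.mpr
            (Nat.choose_pos (Nat.lt_succ_iff.mp m.isLt)).ne'
        exact mul_ne_zero (pow_ne_zero _ (by norm_num)) this
      have hsum : (∑ j : Fin (d + 1), c j * ((m : ℂ) / d) ^ (j : ℕ)) *
          (((X : ℂ[X]) - 1) ^ d).coeff m = 0 := by
        rw [Finset.sum_mul]
        simpa [coeff_rpoly, mul_assoc] using hcoeff
      have := (mul_eq_zero.mp hsum).resolve_right hB
      simpa [Matrix.mulVec, Matrix.vandermonde, dotProduct, hv, mul_comm] using this
    have := Matrix.eq_zero_of_mulVec_eq_zero hdet hvan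
    exact congrFun this k
  refine ⟨hli, ?_⟩
  -- span: dimension count inside degreeLT
  set S := Polynomial.degreeLT ℂ (d + 1) with hS
  have : FiniteDimensional ℂ S :=
    (Polynomial.degreeLTEquiv ℂ (d + 1)).symm.finiteDimensional
  have hfr : Module.finrank ℂ S = d + 1 := by
    rw [(Polynomial.degreeLTEquiv ℂ (d + 1)).finrank_eq]
    simp
  set w : Fin (d + 1) → S := fun k => ⟨rpoly d k, rpoly_mem d k⟩ with hw
  have hliw : LinearIndependent ℂ w := by
    apply LinearIndependent.of_comp S.subtype
    exact hli
  have hspan : Submodule.span ℂ (Set.range w) = ⊤ :=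
    hliw.span_eq_top_of_card_eq_finrank (by simp [hfr])
  have := congrArg (Submodule.map S.subtype) hspan
  rwa [Submodule.map_span, ← Set.range_comp, Submodule.map_subtype_top] at this
end

section
/- For monic polynomials p, q of degree d with all roots nonzero, the reversal identity (p ⊠_d q)^⟨-1⟩ = p^⟨-1⟩ ⊠_d q^⟨-1⟩ holds, where the reversed polynomial is p^⟨-1⟩(x) = x^d p(1/x)/ẽ_d(p). -/
open Polynomial Finset

/-- The reversed polynomial `p^⟨-1⟩`, the monic degree-`d` polynomial with
`ẽ_k(p^⟨-1⟩) = ẽ_{d-k}(p)/ẽ_d(p)`. -/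
noncomputable def revP (d : ℕ) (p : Polynomial ℂ) : Polynomial ℂ :=
  ∑ k ∈ range (d + 1),
    C ((-1) ^ k * (d.choose k : ℂ) * (etilde d p (d - k) / etilde d p d)) * X ^ (d - k)

lemma coeff_sum_form (d : ℕ) (f : ℕ → ℂ) (k : ℕ) (hk : k ≤ d) :
    (∑ j ∈ range (d + 1), C (f j) * X ^ (d - j)).coeff (d - k) = f k := by
  rw [finset_sum_coeff]
  rw [Finset.sum_eq_single k]
  · simp
  · intro j hj hjk
    simp only [coeff_C_mul, coeff_X_pow]
    rw [if_neg, mul_zero]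
    intro h
    have hj' := Finset.mem_range.mp hj
    exact hjk (by omega : j = k)
  · intro h
    exact absurd (Finset.mem_range.mpr (by omega)) h

lemma etilde_sum_form (d : ℕ) (f : ℕ → ℂ) (k : ℕ) (hk : k ≤ d) :
    etilde d (∑ j ∈ range (d + 1), C ((-1) ^ j * (d.choose j : ℂ) * f j) * X ^ (d - j)) k
      = f k := by
  have hc : (d.choose k : ℂ) ≠ 0 := Nat.cast_ne_zero.mpr (Nat.choose_pos hk).ne'
  unfold etilde
  rw [coeff_sum_form d _ k hk]
  field_simp
  have h1 : ((-1 : ℂ)) ^ k * (-1) ^ k = 1 := by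
    rw [← pow_add, ← two_mul, pow_mul]; norm_num
  rw [sq, h1, one_mul]

theorem ffMul_reverse (d : ℕ) (p q : Polynomial ℂ)
    (hp : p.Monic) (hq : q.Monic) (hpd : p.natDegree = d) (hqd : q.natDegree = d)
    (hp0 : p.coeff 0 ≠ 0) (hq0 : q.coeff 0 ≠ 0) :
    revP d (ffMul d p q) = ffMul d (revP d p) (revP d q) := by
  have hM : ∀ k ≤ d, etilde d (ffMul d p q) k = etilde d p k * etilde d q k := by
    intro k hk
    exact etilde_sum_form d (fun j => etilde d p j * etilde d q j) k hk
  have hRp : ∀ k ≤ d, etilde d (revP d p) k = etilde d p (d - k) / etilde d p d :=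
    fun k hk => etilde_sum_form d (fun j => etilde d p (d - j) / etilde d p d) k hk
  have hRq : ∀ k ≤ d, etilde d (revP d q) k = etilde d q (d - k) / etilde d q d :=
    fun k hk => etilde_sum_form d (fun j => etilde d q (d - j) / etilde d q d) k hk
  conv_lhs => rw [revP]
  conv_rhs => rw [ffMul]
  refine Finset.sum_congr rfl fun k hk => ?_
  have hkd : k ≤ d := by
    have := Finset.mem_range.mp hk; omega
  congr 1
  rw [hM (d - k) (by omega), hM d le_rfl, hRp k hkd, hRq k hkd]
  congr 1
  rw [div_mul_div_comm]
end

section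
/- Let p, q be monic real-rooted polynomials of degree d, and suppose F_q(x) ≤ F_p(x) + l/d for all x ∈ ℝ, for some integer 0 ≤ l ≤ d. Then there exists a monic real-rooted polynomial r of degree d such that: (a) p ≤ r, i.e., F_r(x) ≤ F_p(x) for all x; and (b) F_q(x) ≤ F_r(x) + l/d for all x; moreover r can be obtained from q by replacing the l smallest roots of q by a common value a larger than all roots of p and q. -/
open Polynomial Finset

lemma aux_card_filter_lt (d l : ℕ) (hl : l ≤ d) :
    (Finset.univ.filter fun i : Fin d => (i : ℕ) < l).card = l := by
  rcases eq_or_lt_of_le hl with h | h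
  · have : (Finset.univ.filter fun i : Fin d => (i : ℕ) < l) = Finset.univ := by
      ext i; simp [h, i.is_lt]
    rw [this, Finset.card_univ, Fintype.card_fin, h]
  · have : (Finset.univ.filter fun i : Fin d => (i : ℕ) < l) = Finset.Iio ⟨l, h⟩ := by
      ext i; simp [Fin.lt_def]
    rw [this, Fin.card_Iio]

theorem exists_replaced_roots_poly (d l : ℕ) (hd : 0 < d) (hl : l ≤ d)
    (a b : Fin d → ℝ) (ha : Monotone a) (hb : Monotone b)
    (p q : Polynomial ℝ)
    (hp : p = ∏ i, (Polynomial.X - Polynomial.C (a i)))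
    (hq : q = ∏ i, (Polynomial.X - Polynomial.C (b i)))
    (hF : ∀ x : ℝ,
      ((Finset.univ.filter (fun i => b i ≤ x)).card : ℝ) / d ≤
        ((Finset.univ.filter (fun i => a i ≤ x)).card : ℝ) / d + (l : ℝ) / d) :
    ∃ t : ℝ, (∀ i, a i < t) ∧ (∀ i, b i < t) ∧
      -- the roots of `r`: the `l` smallest roots of `q` are replaced by the common value `t`
      ∀ c : Fin d → ℝ, (c = fun i : Fin d => if (i : ℕ) < l then t else b i) →
      ∀ r : Polynomial ℝ, r = ∏ i, (Polynomial.X - Polynomial.C (c i)) →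
        ((∀ x : ℝ,
            ((Finset.univ.filter (fun i => c i ≤ x)).card : ℝ) / d ≤
              ((Finset.univ.filter (fun i => a i ≤ x)).card : ℝ) / d) ∧
         (∀ x : ℝ,
            ((Finset.univ.filter (fun i => b i ≤ x)).card : ℝ) / d ≤
              ((Finset.univ.filter (fun i => c i ≤ x)).card : ℝ) / d + (l : ℝ) / d)) := by
  haveI : Nonempty (Fin d) := ⟨⟨0, hd⟩⟩
  have hd0 : (0 : ℝ) < d := by exact_mod_cast hd
  set t := (Finset.univ.sup' Finset.univ_nonempty fun i => max (a i) (b i)) + 1 with ht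
  have hat : ∀ i, a i < t := fun i =>
    lt_of_le_of_lt (le_trans (le_max_left (a i) (b i))
      (Finset.le_sup' (fun i => max (a i) (b i)) (Finset.mem_univ i))) (lt_add_one _)
  have hbt : ∀ i, b i < t := fun i =>
    lt_of_le_of_lt (le_trans (le_max_right (a i) (b i))
      (Finset.le_sup' (fun i => max (a i) (b i)) (Finset.mem_univ i))) (lt_add_one _)
  refine ⟨t, hat, hbt, ?_⟩
  intro c hc r hr
  set P := Finset.univ.filter fun i : Fin d => (i : ℕ) < l with hP
  have hPcard : P.card = l := aux_card_filter_lt d l hl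
  constructor
  · intro x
    set S := Finset.univ.filter fun i => b i ≤ x with hS
    set A := Finset.univ.filter fun i => a i ≤ x with hA
    by_cases hx : x < t
    · have hCs : (Finset.univ.filter fun i => c i ≤ x) = S \ P := by
        ext i
        simp only [hc, Finset.mem_filter, Finset.mem_univ, true_and, Finset.mem_sdiff, hS, hP]
        by_cases h : (i : ℕ) < l
        · simp [h, not_le.mpr hx]
        · simp [h]
      rw [hCs]
      rcases Finset.eq_empty_or_nonempty (S \ P) with h0 | ⟨i, hi⟩
      · rw [h0]
        simp only [Finset.card_empty, Nat.cast_zero, zero_div]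
        positivity
      · have hiS : i ∈ S := (Finset.mem_sdiff.mp hi).1
        have hil : ¬ (i : ℕ) < l := by
          have := (Finset.mem_sdiff.mp hi).2
          simpa [hP] using this
        have hPS : P ⊆ S := by
          intro j hj
          have hjl : (j : ℕ) < l := by simpa [hP] using hj
          have hji : j ≤ i := by
            have : (j : ℕ) ≤ (i : ℕ) := le_trans hjl.le (not_lt.mp hil)
            exact Fin.le_def.mpr this
          have hbix : b i ≤ x := by simpa [hS] using hiS
          simp only [hS, Finset.mem_filter, Finset.mem_univ, true_and]
          exact le_trans (hb hji) hbix
        have hcard : ((S \ P).card : ℝ) = (S.card : ℝ) - l := by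
          rw [Finset.card_sdiff_of_subset hPS, Nat.cast_sub (Finset.card_le_card hPS), hPcard]
        rw [hcard]
        have := hF x
        rw [← add_div, div_le_div_iff_of_pos_right hd0] at this
        rw [div_le_div_iff_of_pos_right hd0]
        linarith
    · push_neg at hx
      have hAuniv : A = Finset.univ := by
        ext i; simp [hA, le_trans (hat i).le hx]
      rw [hAuniv, Finset.card_univ, Fintype.card_fin, div_le_div_iff_of_pos_right hd0]
      exact_mod_cast le_trans (Finset.card_le_card (Finset.filter_subset _ _))
        (le_of_eq (by rw [Finset.card_univ, Fintype.card_fin]))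
  · intro x
    set S := Finset.univ.filter fun i => b i ≤ x with hS
    by_cases hx : x < t
    · have hCs : (Finset.univ.filter fun i => c i ≤ x) = S \ P := by
        ext i
        simp only [hc, Finset.mem_filter, Finset.mem_univ, true_and, Finset.mem_sdiff, hS, hP]
        by_cases h : (i : ℕ) < l
        · simp [h, not_le.mpr hx]
        · simp [h]
      rw [hCs, ← add_div, div_le_div_iff_of_pos_right hd0]
      have hsub : S ⊆ (S \ P) ∪ P := by
        intro i hi
        by_cases h : i ∈ P
        · exact Finset.mem_union_right _ h
        · exact Finset.mem_union_left _ (Finset.mem_sdiff.mpr ⟨hi, h⟩)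
      have : S.card ≤ (S \ P).card + l := by
        calc S.card ≤ ((S \ P) ∪ P).card := Finset.card_le_card hsub
          _ ≤ (S \ P).card + P.card := Finset.card_union_le _ _
          _ = (S \ P).card + l := by rw [hPcard]
      exact_mod_cast this
    · push_neg at hx
      have hCuniv : (Finset.univ.filter fun i => c i ≤ x) = Finset.univ := by
        ext i
        simp only [hc, Finset.mem_filter, Finset.mem_univ, true_and, iff_true]
        by_cases h : (i : ℕ) < l
        · simpa [h] using hx
        · simpa [h] using le_trans (hbt i).le hx
      rw [hCuniv, Finset.card_univ, Fintype.card_fin, ← add_div,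
        div_le_div_iff_of_pos_right hd0]
      have : S.card ≤ d := le_trans (Finset.card_le_card (Finset.filter_subset _ _))
        (by rw [Finset.card_univ, Fintype.card_fin])
      have : (S.card : ℝ) ≤ d := by exact_mod_cast this
      linarith [Nat.cast_nonneg (α := ℝ) l]
end
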